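/- Let f be a lifetime distribution. For every θ with 0 < θ < π/2, letting K = ⌊2/(πθ)⌋, one has |∑_{n=1}^{K} f(n)·(2 sin²(nθ/2) − i sin(nθ))| ≥ (2/π)·θ·M(K). -/

import Mathlib

open Finset

/-- For a lifetime distribution `f` and `0 < θ < π/2`, with
`K = ⌊2/(πθ)⌋`, one has `|∑_{n=1}^{K} f(n)(2 sin²(nθ/2) − i sin(nθ))| ≥ (2/π)·θ·M(K)`. -/
theorem stmt5 (f : ℕ → ℝ)
    (hf0 : f 0 = 0) (hfpos : ∀ n, 0 ≤ f n) (hfsum : HasSum f 1)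
    (θ : ℝ) (hθ0 : 0 < θ) (hθ : θ < Real.pi / 2) :
    (2 / Real.pi) * θ * ∑ n ∈ Finset.Icc 1 ⌊2 / (Real.pi * θ)⌋₊, (n : ℝ) * f n ≤
      ‖(∑ n ∈ Finset.Icc 1 ⌊2 / (Real.pi * θ)⌋₊,
        (f n : ℂ) * (2 * (Real.sin ((n : ℝ) * θ / 2) : ℂ) ^ 2
          - Complex.I * (Real.sin ((n : ℝ) * θ) : ℂ)))‖ := by
  set K := ⌊2 / (Real.pi * θ)⌋₊ with hK
  have hπ : (0:ℝ) < Real.pi := Real.pi_pos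
  -- Imaginary part of the sum
  have hIm : (∑ n ∈ Finset.Icc 1 K,
        (f n : ℂ) * (2 * (Real.sin ((n : ℝ) * θ / 2) : ℂ) ^ 2
          - Complex.I * (Real.sin ((n : ℝ) * θ) : ℂ))).im
      = -∑ n ∈ Finset.Icc 1 K, f n * Real.sin ((n : ℝ) * θ) := by
    rw [Complex.im_sum, ← Finset.sum_neg_distrib]
    refine Finset.sum_congr rfl fun n _ => ?_
    simp [-Complex.ofReal_sin, Complex.mul_im, Complex.sub_im, pow_two, Complex.mul_re]
  -- key pointwise bound
  have key : ∀ n ∈ Finset.Icc 1 K,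
      (2 / Real.pi) * θ * ((n : ℝ) * f n) ≤ f n * Real.sin ((n : ℝ) * θ) := by
    intro n hn
    rw [Finset.mem_Icc] at hn
    have hnθ : (n : ℝ) * θ ≤ 2 / Real.pi := by
      have h1 : (n : ℝ) ≤ 2 / (Real.pi * θ) := by
        calc (n : ℝ) ≤ (K : ℝ) := by exact_mod_cast hn.2
        _ ≤ 2 / (Real.pi * θ) := Nat.floor_le (by positivity)
      calc (n : ℝ) * θ ≤ (2 / (Real.pi * θ)) * θ :=
            mul_le_mul_of_nonneg_right h1 hθ0.le
      _ = 2 / Real.pi := by field_simp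
    have h2 : 2 / Real.pi ≤ Real.pi / 2 := by
      rw [div_le_div_iff₀ hπ two_pos]; nlinarith [Real.pi_gt_three]
    have hsin := Real.mul_le_sin (x := (n:ℝ) * θ) (by positivity) (hnθ.trans h2)
    calc (2 / Real.pi) * θ * ((n : ℝ) * f n)
        = (2 / Real.pi * ((n:ℝ) * θ)) * f n := by ring
      _ ≤ Real.sin ((n:ℝ) * θ) * f n :=
          mul_le_mul_of_nonneg_right hsin (hfpos n)
      _ = f n * Real.sin ((n:ℝ) * θ) := by ring
  calc (2 / Real.pi) * θ * ∑ n ∈ Finset.Icc 1 K, (n : ℝ) * f n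
      = ∑ n ∈ Finset.Icc 1 K, (2 / Real.pi) * θ * ((n : ℝ) * f n) := by
        rw [Finset.mul_sum]
    _ ≤ ∑ n ∈ Finset.Icc 1 K, f n * Real.sin ((n : ℝ) * θ) := Finset.sum_le_sum key
    _ = |(∑ n ∈ Finset.Icc 1 K,
        (f n : ℂ) * (2 * (Real.sin ((n : ℝ) * θ / 2) : ℂ) ^ 2
          - Complex.I * (Real.sin ((n : ℝ) * θ) : ℂ))).im| := by
        rw [hIm, abs_neg]
        exact (abs_of_nonneg (Finset.sum_nonneg fun n hn => by
          have := key n hn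
          have hn1 := (Finset.mem_Icc.mp hn).1
          nlinarith [hfpos n, mul_nonneg (mul_nonneg (by positivity : (0:ℝ) ≤ 2/Real.pi * θ) (Nat.cast_nonneg n : (0:ℝ) ≤ n)) (hfpos n)])).symm
    _ ≤ ‖_‖ := Complex.abs_im_le_norm _
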